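/- Let d ≥ 1 and let F be a self-adjoint operator on ℂ^d with Q_{ij}(F) real for all i,j ∈ ℤ_d (F ∈ KD^r). Then for all i, k, l ∈ ℤ_d one has F_{(i+lk),(i+(l+1)k)} = F_{i,(i+k)}, where F_{ik} = ⟨a_i|F|a_k⟩ and indices are taken mod d; in particular all entries along any 'cyclic diagonal chain' with step k are equal. -/

import Mathlib

open Complex Matrix
open scoped ComplexOrder

noncomputable section

/-- `omega n = exp(2 π i / n)`, a primitive `n`-th root of unity. -/
def omega (n : ℕ) : ℂ := Complex.exp (2 * Real.pi * Complex.I / n)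

/-- The standard basis vector `a i` of `ℂ^d`. -/
def stdVec (d : ℕ) (i : Fin d) : Fin d → ℂ := fun k => if k = i then 1 else 0

/-- The Fourier (DFT) basis vector `b j = (1/√d) ∑ i, ω_d^(i j) • a i`. -/
def fourierVec (d : ℕ) (j : Fin d) : Fin d → ℂ :=
  fun i => ((1 / Real.sqrt d : ℝ) : ℂ) * omega d ^ (i.val * j.val)

/-- The rank-one projector `|v⟩⟨v|` of a vector `v`, as a matrix. -/
def proj (d : ℕ) (v : Fin d → ℂ) : Matrix (Fin d) (Fin d) ℂ :=
  Matrix.of fun i k => v i * (starRingEnd ℂ) (v k)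

/-- The Kirkwood-Dirac quasiprobability `Q i j F = ⟨b j|a i⟩ * ⟨a i|F|b j⟩`. -/
def KDQ (d : ℕ) (F : Matrix (Fin d) (Fin d) ℂ) (i j : Fin d) : ℂ :=
  (starRingEnd ℂ) (fourierVec d j i) * ∑ k, F i k * fourierVec d j k

/-- The set `KD⁺` of KD classical density matrices: positive semidefinite, trace one,
and all KD quasiprobabilities are nonnegative reals. -/
def KDplus (d : ℕ) : Set (Matrix (Fin d) (Fin d) ℂ) :=
  {ρ | ρ.PosSemidef ∧ ρ.trace = 1 ∧
    ∀ i j, (KDQ d ρ i j).im = 0 ∧ 0 ≤ (KDQ d ρ i j).re}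

/-- The set `KD^r` of self-adjoint operators whose KD distribution is everywhere real. -/
def KDr (d : ℕ) : Set (Matrix (Fin d) (Fin d) ℂ) :=
  {F | F.IsHermitian ∧ ∀ i j, (KDQ d F i j).im = 0}

/-- `A = {|a i⟩⟨a i| : i ∈ ℤ_d}`. -/
def setA (d : ℕ) : Set (Matrix (Fin d) (Fin d) ℂ) :=
  {M | ∃ i : Fin d, M = proj d (stdVec d i)}

/-- `B = {|b j⟩⟨b j| : j ∈ ℤ_d}`. -/
def setB (d : ℕ) : Set (Matrix (Fin d) (Fin d) ℂ) :=
  {M | ∃ j : Fin d, M = proj d (fourierVec d j)}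

/-- For `d = p * q` : `ψ m s = (1/√q) ∑ k ∈ ℤ_q, ω_q^(s k) • a (k p + m)`
(so the `i`-th coordinate is nonzero iff `i ≡ m [MOD p]`, with `k = i / p`). -/
def psiPQ (d p q : ℕ) (m : Fin p) (s : Fin q) : Fin d → ℂ :=
  fun i => if i.val % p = m.val then
    ((1 / Real.sqrt q : ℝ) : ℂ) * omega q ^ (s.val * (i.val / p)) else 0

/-- For `d = p * q` : `φ m' s' = (1/√p) ∑ k ∈ ℤ_p, ω_p^(s' k) • a (k q + m')`. -/
def phiPQ (d p q : ℕ) (m' : Fin q) (s' : Fin p) : Fin d → ℂ :=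
  fun i => if i.val % q = m'.val then
    ((1 / Real.sqrt p : ℝ) : ℂ) * omega p ^ (s'.val * (i.val / q)) else 0

/-- For `d = p ^ 2` : `C = {|ψ m s⟩⟨ψ m s| : m, s ∈ ℤ_p}`. -/
def setC2 (d p : ℕ) : Set (Matrix (Fin d) (Fin d) ℂ) :=
  {M | ∃ m s : Fin p, M = proj d (psiPQ d p p m s)}

/-- For `d = p * q` : `C = {|ψ m s⟩⟨ψ m s| : m ∈ ℤ_p, s ∈ ℤ_q}`. -/
def setC (d p q : ℕ) : Set (Matrix (Fin d) (Fin d) ℂ) :=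
  {M | ∃ (m : Fin p) (s : Fin q), M = proj d (psiPQ d p q m s)}

/-- For `d = p * q` : `D = {|φ m' s'⟩⟨φ m' s'| : m' ∈ ℤ_q, s' ∈ ℤ_p}`. -/
def setD (d p q : ℕ) : Set (Matrix (Fin d) (Fin d) ℂ) :=
  {M | ∃ (m' : Fin q) (s' : Fin p), M = proj d (phiPQ d p q m' s')}

/-- Matrix entries in the Fourier basis: `⟨b k|G|b j⟩`. -/
def entryB (d : ℕ) (G : Matrix (Fin d) (Fin d) ℂ) (k j : Fin d) : ℂ :=
  ∑ i, ∑ l, (starRingEnd ℂ) (fourierVec d k i) * G i l * fourierVec d j l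

lemma omega_ne_zero (d : ℕ) : omega d ≠ 0 := Complex.exp_ne_zero _

lemma omega_prim (d : ℕ) [NeZero d] : IsPrimitiveRoot (omega d) d :=
  Complex.isPrimitiveRoot_exp d (NeZero.ne d)

lemma omega_conj (d : ℕ) : (starRingEnd ℂ) (omega d) = (omega d)⁻¹ := by
  unfold omega
  rw [← Complex.exp_conj, ← Complex.exp_neg]
  congr 1
  have h2 : (starRingEnd ℂ) 2 = 2 := map_ofNat _ 2
  simp [map_div₀, Complex.conj_I, h2]
  ring

lemma sum_omega (d : ℕ) [NeZero d] (n : ℤ) :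
    ∑ j : Fin d, omega d ^ (n * (j.val : ℤ)) = if (d:ℤ) ∣ n then (d:ℂ) else 0 := by
  have hz : ∀ j : Fin d, omega d ^ (n * (j.val : ℤ)) = (omega d ^ n) ^ (j.val) := fun j => by
    rw [_root_.zpow_mul, _root_.zpow_natCast]
  simp only [hz]
  rw [Fin.sum_univ_eq_sum_range (fun j => (omega d ^ n) ^ j) d]
  by_cases h : (d:ℤ) ∣ n
  · have h1 : omega d ^ n = 1 := by
      obtain ⟨t, rfl⟩ := h
      rw [_root_.zpow_mul, _root_.zpow_natCast, (omega_prim d).pow_eq_one, _root_.one_zpow]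
    simp [h1, h]
  · have hne : omega d ^ n ≠ 1 := fun he => h (((omega_prim d).zpow_eq_one_iff_dvd n).mp he)
    rw [geom_sum_eq hne, if_neg h]
    have : (omega d ^ n) ^ d = 1 := by
      rw [← _root_.zpow_natCast, ← _root_.zpow_mul, mul_comm, _root_.zpow_mul, _root_.zpow_natCast,
        (omega_prim d).pow_eq_one, _root_.one_zpow]
    rw [this]
    simp

lemma fin_dvd_iff (d : ℕ) [NeZero d] (k i m : Fin d) :
    (d:ℤ) ∣ ((k.val : ℤ) - i.val - m.val) ↔ k = i + m := by
  rw [show ((k.val:ℤ) - i.val - m.val) = (k.val:ℤ) - ((i.val:ℤ) + m.val) by ring,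
    ← Int.modEq_iff_dvd]
  rw [Fin.ext_iff, Fin.add_def]
  unfold Int.ModEq
  have hA : ((i.val:ℤ) + (m.val:ℤ)) % (d:ℤ) = (((i.val + m.val) % d : ℕ) : ℤ) := by
    push_cast; ring
  have hB : ((k.val:ℤ)) % (d:ℤ) = (k.val:ℤ) :=
    Int.emod_eq_of_lt (by positivity) (by exact_mod_cast k.isLt)
  rw [hA, hB]
  constructor
  · intro h; exact_mod_cast h.symm
  · intro h; exact_mod_cast h.symm

lemma kd_key (d : ℕ) [NeZero d] (F : Matrix (Fin d) (Fin d) ℂ)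
    (hF : F.IsHermitian) (hKD : ∀ i j, (KDQ d F i j).im = 0) :
    ∀ i m : Fin d, F i (i + m) = F (i - m) i := by
  intro i m
  set ω := omega d with hωdef
  have hω0 : ω ≠ 0 := omega_ne_zero d
  have hc : (((1 / Real.sqrt d : ℝ) : ℂ)) ≠ 0 := by
    have : (0:ℝ) < Real.sqrt d := Real.sqrt_pos.mpr (by
      exact_mod_cast Nat.pos_of_ne_zero (NeZero.ne d))
    exact Complex.ofReal_ne_zero.mpr (by positivity)
  have hherm : ∀ a b, (starRingEnd ℂ) (F a b) = F b a := fun a b => by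
    conv_rhs => rw [← hF]
    rw [Matrix.conjTranspose_apply]
    rfl
  set c := (((1 / Real.sqrt d : ℝ) : ℂ)) with hcdef
  have hpow : ∀ (a b j : Fin d),
      (ω⁻¹) ^ (a.val * j.val) * ω ^ (b.val * j.val) = ω ^ (((b.val:ℤ) - a.val) * j.val) := by
    intro a b j
    rw [inv_pow, ← _root_.zpow_natCast ω (a.val*j.val), ← _root_.zpow_natCast ω (b.val*j.val),
      ← _root_.zpow_neg, ← zpow_add₀ hω0]
    congr 1
    push_cast
    ring
  have hE : ∀ j : Fin d, (∑ k, F i k * ω ^ (((k.val:ℤ) - i.val) * j.val))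
      = ∑ k, F k i * ω ^ (((i.val:ℤ) - k.val) * j.val) := by
    intro j
    have h0 := (Complex.conj_eq_iff_im).mpr (hKD i j)
    have hQ : KDQ d F i j = c^2 * ∑ k, F i k * ω ^ (((k.val:ℤ) - i.val) * j.val) := by
      unfold KDQ fourierVec
      rw [Finset.mul_sum, Finset.mul_sum]
      refine Finset.sum_congr rfl fun k _ => ?_
      rw [_root_.map_mul, Complex.conj_ofReal, _root_.map_pow, omega_conj]
      rw [← hpow i k j]
      ring
    have hQc : (starRingEnd ℂ) (KDQ d F i j)
        = c^2 * ∑ k, F k i * ω ^ (((i.val:ℤ) - k.val) * j.val) := by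
      unfold KDQ fourierVec
      rw [_root_.map_mul, _root_.map_sum, Complex.conj_conj, Finset.mul_sum, Finset.mul_sum]
      refine Finset.sum_congr rfl fun k _ => ?_
      rw [_root_.map_mul, _root_.map_mul, hherm, Complex.conj_ofReal, _root_.map_pow, omega_conj, ← hpow k i j]
      ring
    rw [hQc, hQ] at h0
    exact (mul_left_cancel₀ (pow_ne_zero 2 hc) h0).symm
  have h1 : ∑ j : Fin d, (∑ k, F i k * ω ^ (((k.val:ℤ) - i.val) * j.val))
      * ω ^ (-(m.val:ℤ) * j.val) = (d:ℂ) * F i (i + m) := by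
    calc ∑ j : Fin d, (∑ k, F i k * ω ^ (((k.val:ℤ) - i.val) * j.val))
          * ω ^ (-(m.val:ℤ) * j.val)
        = ∑ k, F i k * (if (d:ℤ) ∣ ((k.val:ℤ) - i.val - m.val) then (d:ℂ) else 0) := by
          simp only [Finset.sum_mul]
          rw [Finset.sum_comm]
          refine Finset.sum_congr rfl fun k _ => ?_
          rw [← sum_omega d ((k.val:ℤ) - i.val - m.val), Finset.mul_sum]
          refine Finset.sum_congr rfl fun j _ => ?_
          rw [← hωdef, mul_assoc, ← zpow_add₀ hω0]
          congr 2
          ring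
      _ = (d:ℂ) * F i (i + m) := by
          simp only [fin_dvd_iff, mul_ite, mul_zero]
          rw [Finset.sum_ite_eq' Finset.univ (i + m) (fun k => F i k * (d:ℂ))]
          simp [mul_comm]
  have hdiff : ∀ k : Fin d, ((d:ℤ) ∣ ((i.val:ℤ) - k.val - m.val)) ↔ k = i - m := fun k => by
    rw [fin_dvd_iff d i k m]
    constructor
    · intro h; rw [h]; open Fin.CommRing in ring
    · intro h; rw [h]; open Fin.CommRing in ring
  have h2 : ∑ j : Fin d, (∑ k, F k i * ω ^ (((i.val:ℤ) - k.val) * j.val))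
      * ω ^ (-(m.val:ℤ) * j.val) = (d:ℂ) * F (i - m) i := by
    calc ∑ j : Fin d, (∑ k, F k i * ω ^ (((i.val:ℤ) - k.val) * j.val))
          * ω ^ (-(m.val:ℤ) * j.val)
        = ∑ k, F k i * (if (d:ℤ) ∣ ((i.val:ℤ) - k.val - m.val) then (d:ℂ) else 0) := by
          simp only [Finset.sum_mul]
          rw [Finset.sum_comm]
          refine Finset.sum_congr rfl fun k _ => ?_
          rw [← sum_omega d ((i.val:ℤ) - k.val - m.val), Finset.mul_sum]
          refine Finset.sum_congr rfl fun j _ => ?_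
          rw [← hωdef, mul_assoc, ← zpow_add₀ hω0]
          congr 2
          ring
      _ = (d:ℂ) * F (i - m) i := by
          simp only [hdiff, mul_ite, mul_zero]
          rw [Finset.sum_ite_eq' Finset.univ (i - m) (fun k => F k i * (d:ℂ))]
          simp [mul_comm]
  have h3 : (d:ℂ) * F i (i + m) = (d:ℂ) * F (i - m) i := by
    rw [← h1, ← h2]
    exact Finset.sum_congr rfl fun j _ => by rw [hE j]
  exact mul_left_cancel₀ (Nat.cast_ne_zero.mpr (NeZero.ne d)) h3

/-- For `d ≥ 1` and `F ∈ KD^r` self-adjoint, all entries along any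
cyclic diagonal chain with step `k` are equal: `F_{(i+lk),(i+(l+1)k)} = F_{i,(i+k)}`. -/
theorem stmt16 (d : ℕ) [NeZero d] (F : Matrix (Fin d) (Fin d) ℂ)
    (hF : F.IsHermitian) (hKD : ∀ i j, (KDQ d F i j).im = 0) :
    ∀ i k l : Fin d, F (i + l * k) (i + (l + 1) * k) = F i (i + k) := by
  intro i k l
  have key := kd_key d F hF hKD
  have step : ∀ a : Fin d, F (a + k) (a + k + k) = F a (a + k) := fun a => by
    have h := key (a + k) k
    rwa [add_sub_cancel_right] at h
  open Fin.NatCast Fin.CommRing in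
  have main : ∀ n : ℕ, F (i + (n : Fin d) * k) (i + ((n : Fin d) + 1) * k) = F i (i + k) := by
    intro n
    induction n with
    | zero => simp
    | succ n ih =>
      have hc : ((n + 1 : ℕ) : Fin d) = (n : Fin d) + 1 := by push_cast; ring
      rw [hc]
      have e1 : i + ((n : Fin d) + 1) * k = i + (n : Fin d) * k + k := by ring
      have e2 : i + ((n : Fin d) + 1 + 1) * k = i + (n : Fin d) * k + k + k := by ring
      rw [e1, e2, step (i + (n : Fin d) * k), ← e1]
      exact ih
  have := main l.val
  open Fin.NatCast in
  rwa [Fin.cast_val_eq_self] at this
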